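/- arXiv:2605.25807 — 6 statements merged into one kernel-verified Lean document; each statement's English description precedes it below -/
import Mathlib

section
/- If a closed language J ⊆ L is CA-D-observable with respect to Φ, then J is CA-observable with respect to Φ. -/
/-- CA-D-observable implies CA-observable. -/
theorem stmt1 {A B : Type*} (L J : Set (List A)) (Φ : List A → Set (List B))
    (hJL : J ⊆ L)
    (hLpc : ∀ u w : List A, u <+: w → w ∈ L → u ∈ L)
    (hJpc : ∀ u w : List A, u <+: w → w ∈ J → u ∈ J)
    (hΦ : ∀ w ∈ L, (Φ w).Nonempty)
    (hCADO : ∀ w ∈ J, ∀ w' ∈ J, ∀ σ : A,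
      w ++ [σ] ∈ J → w' ++ [σ] ∈ L → w' ++ [σ] ∉ J → Φ w ∩ Φ w' = ∅) :
    ∀ (w : List A) (σ : A), w ++ [σ] ∈ J →
      ∃ v ∈ Φ w, ∀ w' ∈ L, v ∈ Φ w' →
        w' ∈ J → w' ++ [σ] ∈ L → w' ++ [σ] ∈ J := by
  intro w σ hwσ
  have hwJ : w ∈ J := hJpc w (w ++ [σ]) ⟨[σ], rfl⟩ hwσ
  obtain ⟨v, hv⟩ := hΦ w (hJL hwJ)
  refine ⟨v, hv, fun w' _ hv' hw'J hw'L => ?_⟩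
  by_contra h
  have := hCADO w hwJ w' hw'J σ hwσ hw'L h
  exact absurd this (Set.nonempty_iff_ne_empty.mp ⟨v, hv, hv'⟩)
end

section
/- If a closed language J ⊆ L is CA-D-observable with respect to Φ, then J is CA-S-observable with respect to Φ. -/
/-- CA-D-observable implies CA-S-observable. -/
theorem stmt2 {A B : Type*} (L J : Set (List A)) (Φ : List A → Set (List B))
    (hJL : J ⊆ L)
    (hLpc : ∀ u w : List A, u <+: w → w ∈ L → u ∈ L)
    (hJpc : ∀ u w : List A, u <+: w → w ∈ J → u ∈ J)
    (hΦ : ∀ w ∈ L, (Φ w).Nonempty)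
    (hCADO : ∀ w ∈ J, ∀ w' ∈ J, ∀ σ : A,
      w ++ [σ] ∈ J → w' ++ [σ] ∈ L → w' ++ [σ] ∉ J → Φ w ∩ Φ w' = ∅) :
    ∀ w ∈ J, ∀ σ : A, w ++ [σ] ∈ L →
      (∀ v ∈ Φ w, ∃ w' ∈ J, v ∈ Φ w' ∧ w' ++ [σ] ∈ J) →
      w ++ [σ] ∈ J := by
  intro w hw σ hL hS
  by_contra hn
  obtain ⟨v, hv⟩ := hΦ w (hJL hw)
  obtain ⟨w', hw', hv', hw's⟩ := hS v hv
  have h := hCADO w' hw' w hw σ hw's hL hn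
  exact Set.eq_empty_iff_forall_notMem.mp h v ⟨hv', hv⟩
end

section
/- If a prefix-closed language J ⊆ L is CA-D-observable with respect to Φ, then for all w ∈ Σ* and σ ∈ Σ: wσ ∈ J if and only if w ∈ J, wσ ∈ L, and for all v ∈ Φ(w) and all w' ∈ Φ⁻¹(v), w' ∈ J and w'σ ∈ L imply w'σ ∈ J. -/
/-- if J is CA-D-observable, then wσ ∈ J iff w ∈ J, wσ ∈ L and
every observation v ∈ Φ(w) permissively enables σ. -/
theorem stmt6 {A B : Type*} (L J : Set (List A)) (Φ : List A → Set (List B))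
    (hJL : J ⊆ L)
    (hLpc : ∀ u w : List A, u <+: w → w ∈ L → u ∈ L)
    (hJpc : ∀ u w : List A, u <+: w → w ∈ J → u ∈ J)
    (hJne : J.Nonempty)
    (hΦ : ∀ w ∈ L, (Φ w).Nonempty)
    (hCADO : ∀ w ∈ J, ∀ w' ∈ J, ∀ σ : A,
      w ++ [σ] ∈ J → w' ++ [σ] ∈ L → w' ++ [σ] ∉ J → Φ w ∩ Φ w' = ∅) :
    ∀ (w : List A) (σ : A),
      w ++ [σ] ∈ J ↔
        (w ∈ J ∧ w ++ [σ] ∈ L ∧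
         ∀ v ∈ Φ w, ∀ w' ∈ L, v ∈ Φ w' →
           w' ∈ J → w' ++ [σ] ∈ L → w' ++ [σ] ∈ J) := by
  intro w σ
  constructor
  · intro h
    have hwJ : w ∈ J := hJpc w (w ++ [σ]) ⟨[σ], rfl⟩ h
    refine ⟨hwJ, hJL h, ?_⟩
    intro v hv w' _ hv' hw'J hw'L
    by_contra hcon
    have := hCADO w hwJ w' hw'J σ h hw'L hcon
    exact absurd this (Set.nonempty_iff_ne_empty.mp ⟨v, hv, hv'⟩)
  · rintro ⟨hwJ, hwL, hall⟩
    obtain ⟨v, hv⟩ := hΦ w (hJL hwJ)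
    exact hall v hv w (hJL hwJ) hv hwJ hwL
end

section
/- If J is CA-D-controllable and CA-D-observable, then the state-estimate-based permissive supervisor S_p satisfies L_a(S_p^a/G) = L_r(S_p^a/G) = J; in language terms, the supervisor defined by S_p(v) = {σ ∈ Σ : ∀ w ∈ Φ⁻¹(v), w ∈ J ∧ wσ ∈ L(G) ⟹ wσ ∈ J} achieves both the large and small languages equal to J. -/
/-- The large language `L_a(S^a/G)` of supervisor `S` under cyber-attacks. -/
inductive LargeL {A B : Type*} (L : Set (List A)) (Suc Sca : Set A)
    (Φ : List A → Set (List B)) (S : List B → Set A) : List A → Prop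
  | nil : LargeL L Suc Sca Φ S []
  | snoc (w : List A) (σ : A) :
      LargeL L Suc Sca Φ S w → w ++ [σ] ∈ L →
      (σ ∈ Suc ∨ ∃ v ∈ Φ w, ∃ γ' γ'' : Set A,
        γ' ⊆ Sca ∧ γ'' ⊆ Sca ∧ σ ∈ (S v \ γ') ∪ γ'') →
      LargeL L Suc Sca Φ S (w ++ [σ])

/-- The small language `L_r(S^a/G)` of supervisor `S` under cyber-attacks. -/
inductive SmallL {A B : Type*} (L : Set (List A)) (Suc Sca : Set A)
    (Φ : List A → Set (List B)) (S : List B → Set A) : List A → Prop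
  | nil : SmallL L Suc Sca Φ S []
  | snoc (w : List A) (σ : A) :
      SmallL L Suc Sca Φ S w → w ++ [σ] ∈ L →
      (σ ∈ Suc ∨ ∀ v ∈ Φ w, ∀ γ' γ'' : Set A,
        γ' ⊆ Sca → γ'' ⊆ Sca → σ ∈ (S v \ γ') ∪ γ'') →
      SmallL L Suc Sca Φ S (w ++ [σ])

/-- if J is CA-D-controllable and CA-D-observable, then the
state-estimate-based permissive supervisor S_p achieves
L_a(S_p^a/G) = L_r(S_p^a/G) = J. -/
theorem stmt12 {A B : Type*} (L J : Set (List A)) (Suc Sca : Set A)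
    (Φ : List A → Set (List B))
    (hJL : J ⊆ L)
    (hLpc : ∀ u w : List A, u <+: w → w ∈ L → u ∈ L)
    (hJpc : ∀ u w : List A, u <+: w → w ∈ J → u ∈ J)
    (hJne : ([] : List A) ∈ J)
    (hdisj : Suc ∩ Sca = ∅)
    (hΦ : ∀ w ∈ L, (Φ w).Nonempty)
    -- CA-D-controllability:
    (hCADC1 : ∀ w ∈ J, ∀ σ ∈ Suc ∪ Sca, w ++ [σ] ∈ L → w ++ [σ] ∈ J)
    (hCADC2 : ∀ w ∈ J, ∀ σ ∈ w, σ ∉ Sca)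
    -- CA-D-observability:
    (hCADO : ∀ w ∈ J, ∀ w' ∈ J, ∀ σ : A,
      w ++ [σ] ∈ J → w' ++ [σ] ∈ L → w' ++ [σ] ∉ J → Φ w ∩ Φ w' = ∅) :
    (∀ w : List A,
      LargeL L Suc Sca Φ
        (fun v => {σ : A | ∀ w' ∈ L, v ∈ Φ w' →
          w' ∈ J → w' ++ [σ] ∈ L → w' ++ [σ] ∈ J}) w ↔ w ∈ J) ∧
    (∀ w : List A,
      SmallL L Suc Sca Φ
        (fun v => {σ : A | ∀ w' ∈ L, v ∈ Φ w' →
          w' ∈ J → w' ++ [σ] ∈ L → w' ++ [σ] ∈ J}) w ↔ w ∈ J) := by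

  set Sp : List B → Set A := (fun v => {σ : A | ∀ w' ∈ L, v ∈ Φ w' →
          w' ∈ J → w' ++ [σ] ∈ L → w' ++ [σ] ∈ J}) with hSp
  -- La ⊆ J
  have hLaJ : ∀ w, LargeL L Suc Sca Φ Sp w → w ∈ J := by
    intro w h
    induction h with
    | nil => exact hJne
    | snoc w σ _ hL hσ ih =>
      rcases hσ with h | ⟨v, hv, γ', γ'', hγ', hγ'', hσ⟩
      · exact hCADC1 w ih σ (Or.inl h) hL
      · rcases hσ with ⟨hS, _⟩ | hσ
        · exact hS w (hJL ih) hv ih hL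
        · exact hCADC1 w ih σ (Or.inr (hγ'' hσ)) hL
  -- J ⊆ Lr
  have hJLr : ∀ w ∈ J, SmallL L Suc Sca Φ Sp w := by
    intro w
    induction w using List.reverseRecOn with
    | nil => intro _; exact SmallL.nil
    | append_singleton w σ ih =>
      intro hwJ
      have hw : w ∈ J := hJpc w (w ++ [σ]) ⟨[σ], rfl⟩ hwJ
      have hσSca : σ ∉ Sca := hCADC2 _ hwJ σ (by simp)
      refine SmallL.snoc w σ (ih hw) (hJL hwJ) (Or.inr ?_)
      intro v hv γ' γ'' hγ' _
      left
      refine ⟨?_, fun h => hσSca (hγ' h)⟩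
      intro w' _ hv' hw'J hL'
      by_contra hnot
      have hd := hCADO w hw w' hw'J σ hwJ hL' hnot
      exact absurd (Set.mem_inter hv hv') (by simp [hd])
  -- La ⊆ L
  have hLaL : ∀ w, LargeL L Suc Sca Φ Sp w → w ∈ L := by
    intro w h
    induction h with
    | nil => exact hJL hJne
    | snoc w σ _ hL _ _ => exact hL
  -- Lr ⊆ La
  have hLrLa : ∀ w, SmallL L Suc Sca Φ Sp w → LargeL L Suc Sca Φ Sp w := by
    intro w h
    induction h with
    | nil => exact LargeL.nil
    | snoc w σ _ hL hσ ih =>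
      refine LargeL.snoc w σ ih hL ?_
      rcases hσ with h | h
      · exact Or.inl h
      · obtain ⟨v, hv⟩ := hΦ w (hLaL w ih)
        exact Or.inr ⟨v, hv, ∅, ∅, by simp, by simp, h v hv ∅ ∅ (by simp) (by simp)⟩
  exact ⟨fun w => ⟨hLaJ w, fun h => hLrLa w (hJLr w h)⟩,
         fun w => ⟨fun h => hLaJ w (hLrLa w h), hJLr w⟩⟩
end

section
/- If there exists a supervisor S with L_a(S^a/G) = L_r(S^a/G) = J, then J is CA-D-observable: for all w, w' ∈ J and σ ∈ Σ, wσ ∈ J, w'σ ∈ L(G), w'σ ∉ J imply Φ(w) ∩ Φ(w') = ∅, provided J is CA-D-controllable. -/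
/-- if some supervisor S satisfies
L_a(S^a/G) = L_r(S^a/G) = J and J is CA-D-controllable,
then J is CA-D-observable. -/
theorem stmt13 {A B : Type*} (L J : Set (List A)) (Suc Sca : Set A)
    (Φ : List A → Set (List B)) (S : List B → Set A)
    (hJL : J ⊆ L)
    (hLpc : ∀ u w : List A, u <+: w → w ∈ L → u ∈ L)
    (hJpc : ∀ u w : List A, u <+: w → w ∈ J → u ∈ J)
    (hJne : ([] : List A) ∈ J)
    (hdisj : Suc ∩ Sca = ∅)
    (hΦ : ∀ w ∈ L, (Φ w).Nonempty)
    (hLa : ∀ w : List A, LargeL L Suc Sca Φ S w ↔ w ∈ J)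
    (hLr : ∀ w : List A, SmallL L Suc Sca Φ S w ↔ w ∈ J)
    -- CA-D-controllability:
    (hCADC1 : ∀ w ∈ J, ∀ σ ∈ Suc ∪ Sca, w ++ [σ] ∈ L → w ++ [σ] ∈ J)
    (hCADC2 : ∀ w ∈ J, ∀ σ ∈ w, σ ∉ Sca) :
    ∀ w ∈ J, ∀ w' ∈ J, ∀ σ : A,
      w ++ [σ] ∈ J → w' ++ [σ] ∈ L → w' ++ [σ] ∉ J → Φ w ∩ Φ w' = ∅ := by
  intro w hw w' hw' σ hwσ hw'σL hw'σJ
  by_cases hσuc : σ ∈ Suc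
  · exact absurd (hCADC1 w' hw' σ (Or.inl hσuc) hw'σL) hw'σJ
  ext v
  simp only [Set.mem_inter_iff, Set.mem_empty_iff_false, iff_false, not_and]
  intro hv hv'
  -- extract σ ∈ S v from the small language
  have hSm : SmallL L Suc Sca Φ S (w ++ [σ]) := (hLr _).2 hwσ
  have hσS : σ ∈ S v := by
    generalize heq : w ++ [σ] = u at hSm
    cases hSm with
    | nil => simp at heq
    | snoc w₀ σ₀ hprev hL hcond =>
      obtain ⟨hw₀, hσ₀⟩ : w₀ = w ∧ σ₀ = σ := by
        have := List.append_inj' heq rfl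
        exact ⟨this.1.symm, by simpa using this.2.symm⟩
      subst hw₀ hσ₀
      rcases hcond with h | h
      · exact absurd h hσuc
      · have := h v hv ∅ ∅ (by simp) (by simp)
        simpa using this
  have hLa' : LargeL L Suc Sca Φ S (w' ++ [σ]) := by
    apply LargeL.snoc
    · exact (hLa _).2 hw'
    · exact hw'σL
    · exact Or.inr ⟨v, hv', ∅, ∅, by simp, by simp, by simp [hσS]⟩
  exact hw'σJ ((hLa _).1 hLa')
end

section
/- For any supervisor S under cyber-attacks, the condition 'for all w ∈ L_a(S^a/G) and σ ∈ Σ_c, wσ ∈ L_a(S^a/G) implies for all v ∈ Φ(w) and all γ ∈ S^a(v), σ ∈ γ' holds if and only if L_a(S^a/G) = L_r(S^a/G). -/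
/-- the second nonblocking condition holds iff the large and
small languages coincide. -/
theorem stmt14 {A B : Type*} (L : Set (List A)) (Suc Sca : Set A)
    (Φ : List A → Set (List B)) (S : List B → Set A)
    (hLpc : ∀ u w : List A, u <+: w → w ∈ L → u ∈ L)
    (hScaC : Sca ⊆ {σ : A | σ ∉ Suc})
    (hΦ : ∀ w ∈ L, (Φ w).Nonempty) :
    (∀ (w : List A) (σ : A), LargeL L Suc Sca Φ S w → σ ∉ Suc →
       LargeL L Suc Sca Φ S (w ++ [σ]) →
       ∀ v ∈ Φ w, ∀ γ' γ'' : Set A, γ' ⊆ Sca → γ'' ⊆ Sca →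
         σ ∈ (S v \ γ') ∪ γ'') ↔
    (∀ w : List A, LargeL L Suc Sca Φ S w ↔ SmallL L Suc Sca Φ S w) := by
  have hLmem : ∀ w : List A, LargeL L Suc Sca Φ S w → w ≠ [] → w ∈ L := by
    intro w hw
    cases hw with
    | nil => intro h; exact absurd rfl h
    | snoc w σ h1 h2 h3 => intro _; exact h2
  have hSL : ∀ w : List A, SmallL L Suc Sca Φ S w → LargeL L Suc Sca Φ S w := by
    intro w hw
    induction hw with
    | nil => exact LargeL.nil
    | snoc w σ h1 h2 h3 ih =>
      refine LargeL.snoc w σ ih h2 ?_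
      rcases h3 with h3 | h3
      · exact Or.inl h3
      · have hwL : w ∈ L := hLpc w (w ++ [σ]) ⟨[σ], rfl⟩ h2
        obtain ⟨v, hv⟩ := hΦ w hwL
        exact Or.inr ⟨v, hv, ∅, ∅, by simp, by simp,
          h3 v hv ∅ ∅ (by simp) (by simp)⟩
  have hinv : ∀ x : List A, SmallL L Suc Sca Φ S x → ∀ w σ, x = w ++ [σ] →
      (σ ∈ Suc ∨ ∀ v ∈ Φ w, ∀ γ' γ'' : Set A,
        γ' ⊆ Sca → γ'' ⊆ Sca → σ ∈ (S v \ γ') ∪ γ'') := by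
    intro x hx
    cases hx with
    | nil => intro w σ h; exact absurd h (by simp)
    | snoc w' σ' h1 h2 h3 =>
      intro w σ h
      have hw : w' = w ∧ σ' = σ := by
        have := List.append_inj h (by
          have := congrArg List.length h
          simpa using this)
        exact ⟨this.1, by simpa using this.2⟩
      rw [hw.1, hw.2] at h3
      exact h3
  constructor
  · intro hcond w
    constructor
    · intro hw
      induction hw with
      | nil => exact SmallL.nil
      | snoc w σ h1 h2 h3 ih =>
        refine SmallL.snoc w σ ih h2 ?_
        by_cases hσ : σ ∈ Suc
        · exact Or.inl hσ
        · exact Or.inr (hcond w σ h1 hσ (LargeL.snoc w σ h1 h2 h3))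
    · exact hSL w
  · intro heq w σ hw hσ hwσ
    have := hinv (w ++ [σ]) ((heq (w ++ [σ])).mp hwσ) w σ rfl
    rcases this with h | h
    · exact absurd h hσ
    · exact h
end
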